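/- arXiv:1402.0177 — 3 statements merged into one kernel-verified Lean document; each statement's English description precedes it below -/
import Mathlib

section
/- Let G be the graph obtained by identifying a vertex x of a connected graph G_1 with a vertex of a connected graph G_2 (a one-point union). If G_2 is bipartite and G_1 is non-bipartite, then dim_l(G) = dim_l(G_1). -/
open SimpleGraph

/-- A set `S` is a local metric generator for `G` if every pair of adjacent
vertices is distinguished, by distance, by some element of `S`. -/
def IsLocalMetricGenerator {V : Type*} (G : SimpleGraph V) (S : Set V) : Prop :=
  ∀ ⦃u v : V⦄, G.Adj u v → ∃ w ∈ S, G.dist u w ≠ G.dist v w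

/-- The local metric dimension of a graph. -/
noncomputable def localMetricDim {V : Type*} [Fintype V] (G : SimpleGraph V) : ℕ :=
  sInf {k | ∃ S : Finset V, IsLocalMetricGenerator G ↑S ∧ S.card = k}

/-- A local metric basis: a local metric generator of minimum cardinality. -/
def IsLocalMetricBasis {V : Type*} [Fintype V] (G : SimpleGraph V) (S : Finset V) : Prop :=
  IsLocalMetricGenerator G ↑S ∧ S.card = localMetricDim G

/-- The one-point union (bouquet) of G₁ and G₂, identifying x₁ ∈ V(G₁) with
x₂ ∈ V(G₂); the vertex Sum.inl x₁ plays the role of the identified vertex. -/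
def onePointUnion {V W : Type*} (G₁ : SimpleGraph V) (G₂ : SimpleGraph W)
    (x₁ : V) (x₂ : W) : SimpleGraph (V ⊕ {b : W // b ≠ x₂}) :=
  SimpleGraph.fromRel (fun a b => match a, b with
    | .inl u, .inl w => G₁.Adj u w
    | .inr u, .inr w => G₂.Adj u.1 w.1
    | .inl u, .inr w => u = x₁ ∧ G₂.Adj x₂ w.1
    | .inr _, .inl _ => False)

namespace OPUAux

variable {V W : Type*} {G₁ : SimpleGraph V} {G₂ : SimpleGraph W} {x₁ : V} {x₂ : W}

/-- Projection to the first factor. -/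
def proj₁ (x₁ : V) : V ⊕ {b : W // b ≠ x₂} → V :=
  Sum.elim id (fun _ => x₁)

/-- Projection to the second factor. -/
def proj₂ (x₂ : W) : V ⊕ {b : W // b ≠ x₂} → W :=
  Sum.elim (fun _ => x₂) (fun w => w.1)

lemma adj_inl_inl {u v : V} :
    (onePointUnion G₁ G₂ x₁ x₂).Adj (.inl u) (.inl v) ↔ G₁.Adj u v := by
  simp only [onePointUnion, fromRel_adj]
  constructor
  · rintro ⟨-, h | h⟩
    · exact h
    · exact h.symm
  · intro h
    exact ⟨by simpa using h.ne, Or.inl h⟩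

lemma adj_inr_inr {u v : {b : W // b ≠ x₂}} :
    (onePointUnion G₁ G₂ x₁ x₂).Adj (.inr u) (.inr v) ↔ G₂.Adj u.1 v.1 := by
  simp only [onePointUnion, fromRel_adj]
  constructor
  · rintro ⟨-, h | h⟩
    · exact h
    · exact h.symm
  · intro h
    refine ⟨?_, Or.inl h⟩
    simp only [ne_eq, Sum.inr.injEq]
    intro he
    exact h.ne (by rw [he])

lemma adj_inl_inr {u : V} {v : {b : W // b ≠ x₂}} :
    (onePointUnion G₁ G₂ x₁ x₂).Adj (.inl u) (.inr v) ↔ u = x₁ ∧ G₂.Adj x₂ v.1 := by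
  simp only [onePointUnion, fromRel_adj]
  constructor
  · rintro ⟨-, h | h⟩
    · exact h
    · exact h.elim
  · intro h
    exact ⟨by simp, Or.inl h⟩

/-- The embedding of `G₁` into the one-point union. -/
def iota₁ : G₁ →g onePointUnion G₁ G₂ x₁ x₂ where
  toFun := Sum.inl
  map_rel' := fun h => adj_inl_inl.2 h

/-- The map of `G₂` into the one-point union (sends `x₂` to the identified vertex). -/
noncomputable def iota₂ [DecidableEq W] : G₂ →g onePointUnion G₁ G₂ x₁ x₂ where
  toFun := fun w => if h : w = x₂ then .inl x₁ else .inr ⟨w, h⟩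
  map_rel' := by
    intro a b h
    by_cases ha : a = x₂ <;> by_cases hb : b = x₂
    · exact absurd (ha.trans hb.symm) h.ne
    · rw [dif_pos ha, dif_neg hb]
      exact adj_inl_inr.2 ⟨rfl, ha ▸ h⟩
    · rw [dif_pos hb, dif_neg ha]
      exact (adj_inl_inr.2 ⟨rfl, hb ▸ h.symm⟩).symm
    · rw [dif_neg ha, dif_neg hb]
      exact adj_inr_inr.2 h

/-- Every edge of the union is an edge of exactly one of the two projections
(and collapses under the other). -/
lemma adj_proj (h₁ : G₁.Connected) {a b : V ⊕ {b : W // b ≠ x₂}}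
    (h : (onePointUnion G₁ G₂ x₁ x₂).Adj a b) :
    (G₁.Adj (proj₁ x₁ a) (proj₁ x₁ b) ∧ proj₂ x₂ a = proj₂ x₂ b) ∨
    (proj₁ x₁ a = proj₁ x₁ b ∧ G₂.Adj (proj₂ x₂ a) (proj₂ x₂ b)) := by
  clear h₁
  match a, b with
  | .inl u, .inl v =>
    exact Or.inl ⟨adj_inl_inl.1 h, rfl⟩
  | .inr u, .inr v =>
    exact Or.inr ⟨rfl, adj_inr_inr.1 h⟩
  | .inl u, .inr v =>
    obtain ⟨rfl, hv⟩ := adj_inl_inr.1 h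
    exact Or.inr ⟨rfl, hv⟩
  | .inr u, .inl v =>
    obtain ⟨rfl, hv⟩ := adj_inl_inr.1 h.symm
    exact Or.inr ⟨rfl, hv.symm⟩

/-- Key inequality: the sum of the projected distances is at most the length of
any walk in the one-point union. -/
lemma key_ineq (h₁ : G₁.Connected) (h₂ : G₂.Connected)
    {a b : V ⊕ {b : W // b ≠ x₂}} (p : (onePointUnion G₁ G₂ x₁ x₂).Walk a b) :
    G₁.dist (proj₁ x₁ a) (proj₁ x₁ b) + G₂.dist (proj₂ x₂ a) (proj₂ x₂ b) ≤ p.length := by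
  induction p with
  | nil => simp
  | @cons a c b h p ih =>
    rw [SimpleGraph.Walk.length_cons]
    rcases adj_proj h₁ h with ⟨hadj, heq⟩ | ⟨heq, hadj⟩
    · have t1 : G₁.dist (proj₁ x₁ a) (proj₁ x₁ b) ≤
          G₁.dist (proj₁ x₁ a) (proj₁ x₁ c) + G₁.dist (proj₁ x₁ c) (proj₁ x₁ b) :=
        h₁.dist_triangle
      have t2 : G₁.dist (proj₁ x₁ a) (proj₁ x₁ c) ≤ 1 := by
        simpa using SimpleGraph.dist_le hadj.toWalk
      rw [heq]
      omega
    · have t1 : G₂.dist (proj₂ x₂ a) (proj₂ x₂ b) ≤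
          G₂.dist (proj₂ x₂ a) (proj₂ x₂ c) + G₂.dist (proj₂ x₂ c) (proj₂ x₂ b) :=
        h₂.dist_triangle
      have t2 : G₂.dist (proj₂ x₂ a) (proj₂ x₂ c) ≤ 1 := by
        simpa using SimpleGraph.dist_le hadj.toWalk
      rw [heq]
      omega

lemma dist_inl_inl (h₁ : G₁.Connected) (h₂ : G₂.Connected) (u v : V) :
    (onePointUnion G₁ G₂ x₁ x₂).dist (.inl u) (.inl v) = G₁.dist u v := by
  obtain ⟨p, hp⟩ := h₁.exists_walk_length_eq_dist u v
  have hr : (onePointUnion G₁ G₂ x₁ x₂).Reachable (.inl u) (.inl v) :=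
    ⟨p.map (iota₁ (G₂ := G₂) (x₁ := x₁) (x₂ := x₂))⟩
  refine le_antisymm ?_ ?_
  · have := SimpleGraph.dist_le (p.map (iota₁ (G₂ := G₂) (x₁ := x₁) (x₂ := x₂)))
    rwa [SimpleGraph.Walk.length_map, hp] at this
  · obtain ⟨q, hq⟩ := hr.exists_walk_length_eq_dist
    have := key_ineq h₁ h₂ q
    simp only [proj₁, proj₂, Sum.elim_inl, id] at this
    rw [SimpleGraph.dist_self, hq] at this
    omega

lemma dist_inl_inr [DecidableEq W] (h₁ : G₁.Connected) (h₂ : G₂.Connected)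
    (u : V) (w : {b : W // b ≠ x₂}) :
    (onePointUnion G₁ G₂ x₁ x₂).dist (.inl u) (.inr w) =
      G₁.dist u x₁ + G₂.dist x₂ w.1 := by
  obtain ⟨p, hp⟩ := h₁.exists_walk_length_eq_dist u x₁
  obtain ⟨q, hq⟩ := h₂.exists_walk_length_eq_dist x₂ w.1
  have e1 : (iota₂ (G₁ := G₁) (G₂ := G₂) (x₁ := x₁) (x₂ := x₂)) x₂ = Sum.inl x₁ :=
    dif_pos rfl
  have e2 : (iota₂ (G₁ := G₁) (G₂ := G₂) (x₁ := x₁) (x₂ := x₂)) w.1 = Sum.inr w :=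
    dif_neg w.2
  let r : (onePointUnion G₁ G₂ x₁ x₂).Walk (.inl u) (.inr w) :=
    (p.map (iota₁ (G₂ := G₂) (x₁ := x₁) (x₂ := x₂))).append ((q.map iota₂).copy e1 e2)
  refine le_antisymm ?_ ?_
  · have := SimpleGraph.dist_le r
    have hl : r.length = p.length + q.length := 
      (SimpleGraph.Walk.length_append _ _).trans (congrArg₂ (· + ·)
        (SimpleGraph.Walk.length_map _ _)
        ((SimpleGraph.Walk.length_copy _ _ _).trans (SimpleGraph.Walk.length_map _ _)))
    rwa [hl, hp, hq] at this
  · have hr : (onePointUnion G₁ G₂ x₁ x₂).Reachable (.inl u) (.inr w) := ⟨r⟩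
    obtain ⟨s, hs⟩ := hr.exists_walk_length_eq_dist
    have := key_ineq h₁ h₂ s
    simp only [proj₁, proj₂, Sum.elim_inl, Sum.elim_inr, id] at this
    rw [hs] at this
    exact this

lemma fin2_aux : ∀ x y z : Fin 2, x ≠ y → (x = z ↔ ¬ y = z) := by decide

/-- In a 2-colored graph, walk lengths have parity given by the endpoint colors. -/
lemma walk_parity (C : G₂.Coloring (Fin 2)) {u v : W} (p : G₂.Walk u v) :
    (C u = C v ↔ Even p.length) := by
  induction p with
  | nil => simp
  | @cons a c b h p ih =>
    rw [SimpleGraph.Walk.length_cons, Nat.even_add_one, ← ih]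
    exact fin2_aux _ _ _ (C.valid h)

/-- In a connected bipartite graph, adjacent vertices have different distances
to any fixed vertex. -/
lemma bipartite_dist_ne (h₂ : G₂.Connected) (hb : G₂.Colorable 2) {u v : W}
    (h : G₂.Adj u v) (x : W) : G₂.dist u x ≠ G₂.dist v x := by
  obtain ⟨C⟩ := hb
  obtain ⟨p, hp⟩ := h₂.exists_walk_length_eq_dist u x
  obtain ⟨q, hq⟩ := h₂.exists_walk_length_eq_dist v x
  intro he
  have h1 := walk_parity C p
  have h2 := walk_parity C q
  rw [hp] at h1
  rw [hq] at h2
  rw [he] at h1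
  have : C u = C x ↔ C v = C x := h1.trans h2.symm
  have hne := C.valid h
  rw [fin2_aux _ _ (C x) hne] at this
  tauto

/-- A graph that is not 2-colorable has an edge. -/
lemma exists_adj_of_not_colorable (hnb : ¬ G₁.Colorable 2) : ∃ u v, G₁.Adj u v := by
  by_contra hne
  push_neg at hne
  exact hnb ⟨SimpleGraph.Coloring.mk (fun _ => 0) (fun {u v} h => absurd h (hne u v))⟩

/-- The universal set is always a local metric generator. -/
lemma univ_isGenerator {α : Type*} [Fintype α] (G : SimpleGraph α) :
    IsLocalMetricGenerator G ↑(Finset.univ : Finset α) := by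
  intro u v h
  refine ⟨u, by simp, ?_⟩
  have hvu : G.dist v u ≠ 0 :=
    SimpleGraph.dist_ne_zero_iff_ne_and_reachable.mpr ⟨h.ne', ⟨h.symm.toWalk⟩⟩
  rw [SimpleGraph.dist_self]
  omega

lemma dim_set_nonempty {α : Type*} [Fintype α] (G : SimpleGraph α) :
    {k | ∃ S : Finset α, IsLocalMetricGenerator G ↑S ∧ S.card = k}.Nonempty :=
  ⟨_, Finset.univ, univ_isGenerator G, rfl⟩

lemma exists_basis {α : Type*} [Fintype α] (G : SimpleGraph α) :
    ∃ S : Finset α, IsLocalMetricGenerator G ↑S ∧ S.card = localMetricDim G :=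
  Nat.sInf_mem (dim_set_nonempty G)

lemma dim_le_card {α : Type*} [Fintype α] {G : SimpleGraph α} {S : Finset α}
    (h : IsLocalMetricGenerator G ↑S) : localMetricDim G ≤ S.card :=
  Nat.sInf_le ⟨S, h, rfl⟩

end OPUAux

open OPUAux in
/-- If G is the one-point union of a non-bipartite connected graph G₁ and a
bipartite connected graph G₂, then dim_l(G) = dim_l(G₁). -/
theorem localMetricDim_onePointUnion {V W : Type*} [Fintype V] [Fintype W]
    [DecidableEq W] (G₁ : SimpleGraph V) (G₂ : SimpleGraph W) (x₁ : V) (x₂ : W)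
    (h₁ : G₁.Connected) (h₂ : G₂.Connected) (hnb : ¬ G₁.Colorable 2)
    (hb : G₂.Colorable 2) :
    localMetricDim (onePointUnion G₁ G₂ x₁ x₂) = localMetricDim G₁ := by
  classical
  obtain ⟨u₀, v₀, hadj₀⟩ := exists_adj_of_not_colorable hnb
  refine le_antisymm ?_ ?_
  · -- dim G ≤ dim G₁ : push a basis of G₁ into G
    obtain ⟨S₁, hS₁, hcard₁⟩ := exists_basis G₁
    have hS₁ne : S₁.Nonempty := by
      obtain ⟨w, hw, -⟩ := hS₁ hadj₀
      exact ⟨w, hw⟩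
    obtain ⟨s₀, hs₀⟩ := hS₁ne
    have hgen : IsLocalMetricGenerator (onePointUnion G₁ G₂ x₁ x₂)
        ↑(S₁.image Sum.inl : Finset (V ⊕ {b : W // b ≠ x₂})) := by
      intro a b hab
      match a, b with
      | .inl u, .inl v =>
        obtain ⟨w, hw, hne⟩ := hS₁ (adj_inl_inl.1 hab)
        exact ⟨.inl w, by simpa using hw, by
          rwa [dist_inl_inl h₁ h₂, dist_inl_inl h₁ h₂]⟩
      | .inr u, .inr v =>
        refine ⟨.inl s₀, by simpa using hs₀, ?_⟩
        rw [SimpleGraph.dist_comm (G := onePointUnion G₁ G₂ x₁ x₂) (u := Sum.inr u),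
          SimpleGraph.dist_comm (G := onePointUnion G₁ G₂ x₁ x₂) (u := Sum.inr v),
          dist_inl_inr h₁ h₂, dist_inl_inr h₁ h₂,
          SimpleGraph.dist_comm (G := G₂) (u := x₂) (v := u.1),
          SimpleGraph.dist_comm (G := G₂) (u := x₂) (v := v.1)]
        have := bipartite_dist_ne h₂ hb (adj_inr_inr.1 hab) x₂
        omega
      | .inl u, .inr v =>
        obtain ⟨rfl, hv⟩ := adj_inl_inr.1 hab
        refine ⟨.inl s₀, by simpa using hs₀, ?_⟩
        rw [dist_inl_inl h₁ h₂,
          SimpleGraph.dist_comm (G := onePointUnion G₁ G₂ u x₂) (u := Sum.inr v),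
          dist_inl_inr h₁ h₂,
          SimpleGraph.dist_comm (G := G₁) (u := s₀) (v := u)]
        have : G₂.dist x₂ v.1 ≠ 0 := by
          rw [SimpleGraph.dist_ne_zero_iff_ne_and_reachable]
          exact ⟨fun he => v.2 he.symm, ⟨hv.toWalk⟩⟩
        omega
      | .inr u, .inl v =>
        obtain ⟨rfl, hv⟩ := adj_inl_inr.1 hab.symm
        refine ⟨.inl s₀, by simpa using hs₀, ?_⟩
        rw [dist_inl_inl h₁ h₂,
          SimpleGraph.dist_comm (G := onePointUnion G₁ G₂ v x₂) (u := Sum.inr u),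
          dist_inl_inr h₁ h₂,
          SimpleGraph.dist_comm (G := G₁) (u := s₀) (v := v)]
        have : G₂.dist x₂ u.1 ≠ 0 := by
          rw [SimpleGraph.dist_ne_zero_iff_ne_and_reachable]
          exact ⟨fun he => u.2 he.symm, ⟨hv.toWalk⟩⟩
        omega
    calc localMetricDim (onePointUnion G₁ G₂ x₁ x₂) ≤ (S₁.image Sum.inl).card :=
          dim_le_card hgen
      _ = S₁.card := Finset.card_image_of_injective _ Sum.inl_injective
      _ = localMetricDim G₁ := hcard₁
  · -- dim G₁ ≤ dim G : project a basis of G down to G₁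
    classical
    obtain ⟨S, hS, hcard⟩ := exists_basis (onePointUnion G₁ G₂ x₁ x₂)
    have hgen : IsLocalMetricGenerator G₁ ↑(S.image (proj₁ (x₂ := x₂) x₁)) := by
      intro u v huv
      obtain ⟨s, hs, hne⟩ := hS ((adj_inl_inl (G₂ := G₂) (x₁ := x₁) (x₂ := x₂)).2 huv)
      match s with
      | .inl w =>
        refine ⟨w, ?_, ?_⟩
        · simp only [Finset.coe_image, Set.mem_image, Finset.mem_coe]
          exact ⟨.inl w, hs, rfl⟩
        · rwa [dist_inl_inl h₁ h₂, dist_inl_inl h₁ h₂] at hne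
      | .inr w =>
        refine ⟨x₁, ?_, ?_⟩
        · simp only [Finset.coe_image, Set.mem_image, Finset.mem_coe]
          exact ⟨.inr w, hs, rfl⟩
        · rw [dist_inl_inr h₁ h₂, dist_inl_inr h₁ h₂] at hne
          omega
    calc localMetricDim G₁ ≤ (S.image (proj₁ (x₂ := x₂) x₁)).card := dim_le_card hgen
      _ ≤ S.card := Finset.card_image_le
      _ = localMetricDim (onePointUnion G₁ G₂ x₁ x₂) := hcard
end

section
/- Let G be a connected graph of order n ≥ 2 and let H_1, ..., H_n be connected bipartite graphs with chosen roots v_i ∈ V(H_i). The rooted product graph obtained by identifying the root of H_i with the i-th vertex of G satisfies dim_l(G∘𝓗) = dim_l(G). -/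
open SimpleGraph

/-- The rooted product of G with a family of rooted graphs (Hᵢ, rᵢ), one for
each vertex i of G: the root of Hᵢ is identified with the vertex i of G. -/
def rootedProdFamily {ι : Type*} {W : ι → Type*} (G : SimpleGraph ι)
    (H : ∀ i, SimpleGraph (W i)) (r : ∀ i, W i) : SimpleGraph (Σ i, W i) :=
  SimpleGraph.fromRel (fun a b =>
    (∃ h : a.1 = b.1, (H b.1).Adj (h ▸ a.2) b.2) ∨
    (a.2 = r a.1 ∧ b.2 = r b.1 ∧ G.Adj a.1 b.1))

section aux
variable {ι : Type*} {W : ι → Type*} {G : SimpleGraph ι}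
    {H : ∀ i, SimpleGraph (W i)} {r : ∀ i, W i}

lemma rpf_adj_fiber {j : ι} {a b : W j} (h : (H j).Adj a b) :
    (rootedProdFamily G H r).Adj ⟨j, a⟩ ⟨j, b⟩ := by
  refine ⟨fun he => h.ne (by simpa using he), Or.inl (Or.inl ⟨rfl, h⟩)⟩

lemma rpf_adj_root {i j : ι} (h : G.Adj i j) :
    (rootedProdFamily G H r).Adj ⟨i, r i⟩ ⟨j, r j⟩ := by
  refine ⟨fun he => h.ne (congrArg Sigma.fst he), Or.inl (Or.inr ⟨rfl, rfl, h⟩)⟩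

lemma rpf_adj_cases {x y : Σ i, W i} (h : (rootedProdFamily G H r).Adj x y) :
    (∃ (j : ι) (a b : W j), x = ⟨j, a⟩ ∧ y = ⟨j, b⟩ ∧ (H j).Adj a b) ∨
    (x.2 = r x.1 ∧ y.2 = r y.1 ∧ G.Adj x.1 y.1) := by
  obtain ⟨j, a⟩ := x
  obtain ⟨j', b⟩ := y
  obtain ⟨-, (⟨heq, hadj⟩ | ⟨h1, h2, h3⟩) | (⟨heq, hadj⟩ | ⟨h1, h2, h3⟩)⟩ := h
  · dsimp only at heq; subst heq; exact Or.inl ⟨j, a, b, rfl, rfl, hadj⟩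
  · exact Or.inr ⟨h1, h2, h3⟩
  · dsimp only at heq; subst heq; exact Or.inl ⟨j', a, b, rfl, rfl, hadj.symm⟩
  · exact Or.inr ⟨h2, h1, h3.symm⟩

def fiberHom (i : ι) : H i →g rootedProdFamily G H r :=
  ⟨fun w => ⟨i, w⟩, rpf_adj_fiber⟩

def rootHom : G →g rootedProdFamily (W := W) G H r :=
  ⟨fun i => ⟨i, r i⟩, rpf_adj_root⟩

lemma lipschitz_walk {V : Type*} {G' : SimpleGraph V} (f : V → ℕ)
    (hf : ∀ u v, G'.Adj u v → f u ≤ f v + 1) {u v : V} (p : G'.Walk u v) :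
    f u ≤ p.length + f v := by
  induction p with
  | nil => simp
  | cons h p ih =>
    simp only [Walk.length_cons]
    have := hf _ _ h
    omega

lemma rpf_dist (hG : G.Connected) (hH : ∀ i, (H i).Connected) (i k : ι) (a : W i) :
    (rootedProdFamily G H r).dist ⟨i, a⟩ ⟨k, r k⟩ = (H i).dist a (r i) + G.dist i k := by
  obtain ⟨p, hp⟩ := (hH i).exists_walk_length_eq_dist a (r i)
  obtain ⟨q, hq⟩ := hG.exists_walk_length_eq_dist i k
  have hwalk : ((p.map (fiberHom i)).append (q.map (rootHom (r := r)))).length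
      = (H i).dist a (r i) + G.dist i k := by
    exact (Walk.length_append _ _).trans (congrArg₂ (· + ·) ((Walk.length_map _ _).trans hp) ((Walk.length_map _ _).trans hq))
  apply le_antisymm
  · exact hwalk ▸ dist_le _
  · set f : (Σ j, W j) → ℕ := fun x => (H x.1).dist x.2 (r x.1) + G.dist x.1 k with hf
    have hlip : ∀ u v, (rootedProdFamily G H r).Adj u v → f u ≤ f v + 1 := by
      intro u v huv
      rcases rpf_adj_cases huv with ⟨j, c, d, rfl, rfl, hadj⟩ | ⟨h1, h2, h3⟩
      · have : (H j).dist c (r j) ≤ (H j).dist d (r j) + 1 := by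
          have := (hH j).dist_triangle (u := c) (v := d) (w := r j)
          rwa [dist_eq_one_iff_adj.mpr hadj, add_comm] at this
        simp only [hf]; omega
      · have : G.dist u.1 k ≤ G.dist v.1 k + 1 := by
          have := hG.dist_triangle (u := u.1) (v := v.1) (w := k)
          rwa [dist_eq_one_iff_adj.mpr h3, add_comm] at this
        simp only [hf, h1, h2, SimpleGraph.dist_self]
        omega
    have hreach : (rootedProdFamily G H r).Reachable ⟨i, a⟩ ⟨k, r k⟩ :=
      ⟨(p.map (fiberHom i)).append (q.map (rootHom (r := r)))⟩
    obtain ⟨w, hw⟩ := hreach.exists_walk_length_eq_dist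
    have := lipschitz_walk f hlip w
    simp only [hf, SimpleGraph.dist_self] at this
    omega

lemma bip_dist_ne {V : Type*} {G' : SimpleGraph V} (hc : G'.Connected)
    (hb : G'.Colorable 2) {a b x : V} (hab : G'.Adj a b) :
    G'.dist a x ≠ G'.dist b x := by
  obtain ⟨C⟩ := hb
  set c : V → ZMod 2 := fun v => if C v = 0 then 0 else 1 with hc'
  have hdiff : ∀ u v, G'.Adj u v → c v = c u + 1 := by
    intro u v huv
    have := C.valid huv
    simp only [hc']
    have h2 : ∀ z : Fin 2, z = 0 ∨ z = 1 := by decide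
    rcases h2 (C u) with h3 | h3 <;> rcases h2 (C v) with h4 | h4 <;>
      simp [h3, h4] at this ⊢ <;> decide
  have hwalk : ∀ {u v : V} (p : G'.Walk u v), c v = c u + (p.length : ZMod 2) := by
    intro u v p
    induction p with
    | nil => simp
    | cons h p ih =>
      rw [Walk.length_cons, ih, hdiff _ _ h]
      push_cast
      ring
  intro hd
  obtain ⟨p, hp⟩ := hc.exists_walk_length_eq_dist a x
  obtain ⟨q, hq⟩ := hc.exists_walk_length_eq_dist b x
  have h1 := hwalk p
  have h2 := hwalk q
  rw [hp] at h1; rw [hq] at h2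
  rw [hd, h2] at h1
  have heq : c a = c b := (add_right_cancel h1).symm
  have hab' := hdiff _ _ hab
  rw [heq] at hab'
  simp at hab'

lemma gen_univ {V : Type*} [Fintype V] (G' : SimpleGraph V) :
    IsLocalMetricGenerator G' ↑(Finset.univ : Finset V) := by
  intro u v huv
  refine ⟨u, by simp, ?_⟩
  rw [SimpleGraph.dist_self, dist_eq_one_iff_adj.mpr huv.symm]
  omega

lemma dim_set_nonempty {V : Type*} [Fintype V] (G' : SimpleGraph V) :
    {k | ∃ S : Finset V, IsLocalMetricGenerator G' ↑S ∧ S.card = k}.Nonempty :=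
  ⟨_, Finset.univ, gen_univ G', rfl⟩

lemma dim_le {V : Type*} [Fintype V] {G' : SimpleGraph V} {S : Finset V}
    (h : IsLocalMetricGenerator G' ↑S) : localMetricDim G' ≤ S.card :=
  Nat.sInf_le ⟨S, h, rfl⟩

lemma exists_basis {V : Type*} [Fintype V] (G' : SimpleGraph V) :
    ∃ S : Finset V, IsLocalMetricGenerator G' ↑S ∧ S.card = localMetricDim G' :=
  Nat.sInf_mem (dim_set_nonempty G')

end aux

/-- If G is connected of order n ≥ 2 and each Hᵢ is a connected bipartite graph,
then the rooted product satisfies dim_l(G ∘ 𝓗) = dim_l(G). -/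
theorem localMetricDim_rootedProdFamily_bipartite {ι : Type*} [Fintype ι]
    [DecidableEq ι] {W : ι → Type*} [∀ i, Fintype (W i)] (G : SimpleGraph ι)
    (H : ∀ i, SimpleGraph (W i)) (r : ∀ i, W i) (hG : G.Connected)
    (hn : 2 ≤ Fintype.card ι) (hH : ∀ i, (H i).Connected)
    (hb : ∀ i, (H i).Colorable 2) :
    localMetricDim (rootedProdFamily G H r) = localMetricDim G := by
  classical
  -- G has an edge
  obtain ⟨u0, v0, huv0⟩ : ∃ u v : ι, G.Adj u v := by
    have hlt : 1 < Fintype.card ι := by omega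
    obtain ⟨u, v, huv⟩ := Fintype.one_lt_card_iff.mp hlt
    obtain ⟨p, hp⟩ := hG.exists_walk_length_eq_dist u v
    cases p with
    | nil => exact absurd rfl huv
    | cons h _ => exact ⟨_, _, h⟩
  obtain ⟨S, hSgen, hScard⟩ := exists_basis G
  obtain ⟨T, hTgen, hTcard⟩ := exists_basis (rootedProdFamily G H r)
  have hSne : S.Nonempty := by
    rcases Finset.eq_empty_or_nonempty S with rfl | h
    · obtain ⟨w, hw, -⟩ := hSgen huv0
      simp at hw
    · exact h
  apply le_antisymm
  · -- dim P ≤ dim G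
    rw [← hScard]
    have hcard : (S.image fun i => (⟨i, r i⟩ : Σ i, W i)).card = S.card :=
      Finset.card_image_of_injective _ (fun i j h => congrArg Sigma.fst h)
    refine le_trans (dim_le ?_) hcard.le
    intro x y hxy
    rcases rpf_adj_cases hxy with ⟨j, a, b, rfl, rfl, hadj⟩ | ⟨h1, h2, h3⟩
    · obtain ⟨k, hk⟩ := hSne
      refine ⟨⟨k, r k⟩, Finset.mem_coe.mpr (Finset.mem_image_of_mem _ hk), ?_⟩
      rw [rpf_dist hG hH, rpf_dist hG hH]
      have := bip_dist_ne (hH j) (hb j) hadj (x := r j)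
      omega
    · obtain ⟨k, hkS, hkd⟩ := hSgen h3
      obtain ⟨i1, a1⟩ := x
      obtain ⟨i2, a2⟩ := y
      dsimp only at h1 h2 h3
      subst h1; subst h2
      refine ⟨⟨k, r k⟩, Finset.mem_coe.mpr (Finset.mem_image_of_mem _ hkS), ?_⟩
      rw [rpf_dist hG hH, rpf_dist hG hH, SimpleGraph.dist_self, SimpleGraph.dist_self]
      simpa using hkd
  · -- dim G ≤ dim P
    rw [← hTcard]
    refine le_trans (dim_le (S := T.image Sigma.fst) ?_) Finset.card_image_le
    intro i j hij
    obtain ⟨w, hwT, hwd⟩ := hTgen (rpf_adj_root (r := r) hij)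
    obtain ⟨k, b⟩ := w
    refine ⟨k, Finset.mem_coe.mpr (Finset.mem_image_of_mem Sigma.fst (Finset.mem_coe.mp hwT)), ?_⟩
    rw [SimpleGraph.dist_comm (u := (⟨i, r i⟩ : Σ i, W i)),
      SimpleGraph.dist_comm (u := (⟨j, r j⟩ : Σ i, W i))] at hwd
    rw [rpf_dist hG hH, rpf_dist hG hH] at hwd
    rw [SimpleGraph.dist_comm (u := i), SimpleGraph.dist_comm (u := j)]
    omega
end

section
/- Let G be a graph obtained by identifying one vertex of each of two odd cycles (a bouquet of two non-bipartite cycles at a common vertex x). Then dim_l(G) = 2. -/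
open SimpleGraph

open Fin.CommRing Fin.NatCast


private lemma key1 (n : ℕ) (c : Fin (n+3)) :
    min (c+1).val (-(c+1)).val ≤ min c.val (-c).val + 1 := by
  have hc := c.isLt
  have h2 : ∀ a : Fin (n+3), (-a).val = (n+3 - a.val) % (n+3) := fun a => by rw [Fin.neg_def]
  have e1 : (c+1).val = (c.val+1) % (n+3) := by rw [Fin.add_def]; rfl
  have e2 : (-(c+1)).val = (n+3 - (c.val+1) % (n+3)) % (n+3) := by rw [h2, e1]
  have e3 : (-c).val = (n+3 - c.val) % (n+3) := h2 c
  rw [e1, e2, e3]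
  rcases Nat.lt_or_ge (c.val + 1) (n+3) with h | h
  · rw [Nat.mod_eq_of_lt h, Nat.mod_eq_of_lt (show n+3 - (c.val+1) < n+3 by omega)]
    rcases Nat.eq_zero_or_pos c.val with h0 | h0
    · rw [h0]; simp
    · rw [Nat.mod_eq_of_lt (show n+3 - c.val < n+3 by omega)]; omega
  · have hce : c.val + 1 = n + 3 := by omega
    rw [hce, Nat.mod_self, Nat.sub_zero, Nat.mod_self,
      show n+3 - c.val = 1 by omega, Nat.mod_eq_of_lt (by omega)]
    omega

private lemma key2 (n : ℕ) (c : Fin (n+3)) :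
    min (c-1).val (-(c-1)).val ≤ min c.val (-c).val + 1 := by
  have h := key1 n (-c)
  have e1 : (-c) + 1 = -(c - 1) := by ring
  rw [e1] at h
  simp only [neg_neg] at h
  omega

private lemma cyc_dist_le (n : ℕ) (i : Fin (n+3)) (k : ℕ) :
    (cycleGraph (n+3)).dist i (i + (k : Fin (n+3))) ≤ k := by
  induction k with
  | zero => simp
  | succ k ih =>
    have hadj : (cycleGraph (n+3)).Adj (i + (k : Fin (n+3))) (i + ((k+1 : ℕ) : Fin (n+3))) := by
      rw [cycleGraph_adj]
      right
      push_cast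
      ring
    calc (cycleGraph (n+3)).dist i (i + ((k+1:ℕ) : Fin (n+3)))
        ≤ (cycleGraph (n+3)).dist i (i + (k : Fin (n+3)))
          + (cycleGraph (n+3)).dist (i + (k : Fin (n+3))) (i + ((k+1:ℕ) : Fin (n+3))) :=
          cycleGraph_connected.dist_triangle
      _ ≤ k + 1 := by
          have := dist_eq_one_iff_adj.mpr hadj
          omega

private lemma cyc_dist_lower (n : ℕ) {i j : Fin (n+3)} (p : (cycleGraph (n+3)).Walk i j) :
    min (j - i).val (i - j).val ≤ p.length := by
  induction p with
  | nil => simp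
  | @cons a b c h q ih =>
    rw [cycleGraph_adj] at h
    rw [SimpleGraph.Walk.length_cons]
    rcases h with h | h
    · -- a - b = 1, i.e. b = a - 1 : c - a = (c - b) - 1
      have hb : b = a - 1 := by rw [← h]; ring
      subst hb
      have e1 : c - a = (c - (a-1)) - 1 := by ring
      have e2 : a - c = -((c - (a-1)) - 1) := by ring
      rw [e1, e2]
      have := key2 n (c - (a-1))
      have en : (-(c - (a-1))).val = ((a-1) - c).val := by ring_nf
      omega
    · have hb : b = a + 1 := by rw [← h]; ring
      subst hb
      have e1 : c - a = (c - (a+1)) + 1 := by ring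
      have e2 : a - c = -((c - (a+1)) + 1) := by ring
      rw [e1, e2]
      have := key1 n (c - (a+1))
      have en : (-(c - (a+1))).val = ((a+1) - c).val := by ring_nf
      omega

private lemma cyc_dist (n : ℕ) (i j : Fin (n+3)) :
    (cycleGraph (n+3)).dist i j = min (j - i).val (i - j).val := by
  apply le_antisymm
  · apply le_min
    · have := cyc_dist_le n i (j - i).val
      rwa [Fin.cast_val_eq_self, add_sub_cancel] at this
    · have := cyc_dist_le n j (i - j).val
      rw [Fin.cast_val_eq_self, add_sub_cancel] at this
      rwa [SimpleGraph.dist_comm] at this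
  · obtain ⟨p, hp⟩ := cycleGraph_connected.exists_walk_length_eq_dist i j
    rw [← hp]
    exact cyc_dist_lower n p


private lemma cyc_step (K : ℕ) (u w : Fin (2*K+3)) 
    (h : (cycleGraph (2*K+3)).dist u w = (cycleGraph (2*K+3)).dist (u+1) w) :
    (u - w).val = K + 1 := by
  rw [cyc_dist, cyc_dist] at h
  have hc1 : w - u = -(u - w) := by ring
  have hc2 : u + 1 - w = (u - w) + 1 := by ring
  have hc3 : w - (u + 1) = -((u - w) + 1) := by ring
  rw [hc1, hc2, hc3] at h
  set c := u - w with hc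
  have hlt := c.isLt
  have hneg : ∀ a : Fin (2*K+3), (-a).val = (2*K+3 - a.val) % (2*K+3) := fun a => by
    rw [Fin.neg_def]
  have e1 : (c+1).val = (c.val+1) % (2*K+3) := by rw [Fin.add_def]; rfl
  have e2 : (-(c+1)).val = (2*K+3 - (c.val+1) % (2*K+3)) % (2*K+3) := by rw [hneg, e1]
  have e3 : (-c).val = (2*K+3 - c.val) % (2*K+3) := hneg c
  rw [e1, e2, e3] at h
  rcases Nat.lt_or_ge (c.val + 1) (2*K+3) with hl | hl
  · rw [Nat.mod_eq_of_lt hl, Nat.mod_eq_of_lt (show 2*K+3 - (c.val+1) < 2*K+3 by omega)] at h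
    rcases Nat.eq_zero_or_pos c.val with h0 | h0
    · rw [h0, Nat.sub_zero, Nat.mod_self] at h; omega
    · rw [Nat.mod_eq_of_lt (show 2*K+3 - c.val < 2*K+3 by omega)] at h; omega
  · have hce : c.val + 1 = 2*K + 3 := by omega
    rw [hce, Nat.mod_self, Nat.sub_zero, Nat.mod_self,
      show 2*K+3 - c.val = 1 by omega, Nat.mod_eq_of_lt (by omega)] at h
    omega

private lemma cyc_pair_aux (K : ℕ) (u w : Fin (2*K+3))
    (h1 : (cycleGraph (2*K+3)).dist u w = (cycleGraph (2*K+3)).dist (u+1) w)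
    (h2 : (cycleGraph (2*K+3)).dist u (w+1) = (cycleGraph (2*K+3)).dist (u+1) (w+1)) :
    False := by
  have k1 := cyc_step K u w h1
  have k2 := cyc_step K u (w+1) h2
  have hc : u - w = ((K+1 : ℕ) : Fin (2*K+3)) := by
    apply Fin.ext
    rw [Fin.val_cast_of_lt (by omega), k1]
  have hsub : u - (w+1) = (u - w) - 1 := by ring
  rw [hsub, hc] at k2
  have : (((K+1:ℕ) : Fin (2*K+3)) - 1) = ((K : ℕ) : Fin (2*K+3)) := by push_cast; ring
  rw [this, Fin.val_cast_of_lt (by omega)] at k2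
  omega

private lemma cyc_pair (K : ℕ) (u v w : Fin (2*K+3))
    (huv : (cycleGraph (2*K+3)).Adj u v)
    (h1 : (cycleGraph (2*K+3)).dist u w = (cycleGraph (2*K+3)).dist v w)
    (h2 : (cycleGraph (2*K+3)).dist u (w+1) = (cycleGraph (2*K+3)).dist v (w+1)) :
    False := by
  rw [cycleGraph_adj] at huv
  rcases huv with h | h
  · have hv : u = v + 1 := by rw [← h]; ring
    subst hv
    exact cyc_pair_aux K v w h1.symm h2.symm
  · have hv : v = u + 1 := by rw [← h]; ring
    subst hv
    exact cyc_pair_aux K u w h1 h2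

private lemma cyc_antipodal (K : ℕ) (w : Fin (2*K+3)) :
    (cycleGraph (2*K+3)).dist (w + ((K+1:ℕ) : Fin (2*K+3))) w = K+1 ∧
    (cycleGraph (2*K+3)).dist (w + ((K+2:ℕ) : Fin (2*K+3))) w = K+1 ∧
    (cycleGraph (2*K+3)).Adj (w + ((K+1:ℕ) : Fin (2*K+3))) (w + ((K+2:ℕ) : Fin (2*K+3))) ∧
    w + ((K+1:ℕ) : Fin (2*K+3)) ≠ w ∧ w + ((K+2:ℕ) : Fin (2*K+3)) ≠ w := by
  have hneg : ∀ a : Fin (2*K+3), (-a).val = (2*K+3 - a.val) % (2*K+3) := fun a => by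
    rw [Fin.neg_def]
  have hd : ∀ a : Fin (2*K+3), (cycleGraph (2*K+3)).dist (w + a) w = min ((-a).val) a.val := by
    intro a
    rw [cyc_dist]
    congr 1
    · congr 1; ring
    · congr 1; ring
  have v1 : (((K+1:ℕ)) : Fin (2*K+3)).val = K+1 := Fin.val_cast_of_lt (by omega)
  have v2 : (((K+2:ℕ)) : Fin (2*K+3)).val = K+2 := Fin.val_cast_of_lt (by omega)
  have n1 : (-((K+1:ℕ) : Fin (2*K+3))).val = K+2 := by
    rw [hneg, v1, show 2*K+3-(K+1) = K+2 by omega, Nat.mod_eq_of_lt (by omega)]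
  have n2 : (-((K+2:ℕ) : Fin (2*K+3))).val = K+1 := by
    rw [hneg, v2, show 2*K+3-(K+2) = K+1 by omega, Nat.mod_eq_of_lt (by omega)]
  refine ⟨?_, ?_, ?_, ?_, ?_⟩
  · rw [hd, v1, n1]; omega
  · rw [hd, v2, n2]; omega
  · rw [cycleGraph_adj]; right; push_cast; ring
  · intro h
    have h0 := congrArg Fin.val (add_eq_left.mp h)
    rw [v1] at h0
    simp at h0
  · intro h
    have h0 := congrArg Fin.val (add_eq_left.mp h)
    rw [v2] at h0
    simp at h0

section opu
variable {V W : Type*} [DecidableEq V] [DecidableEq W]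
  {G₁ : SimpleGraph V} {G₂ : SimpleGraph W} {x₁ : V} {x₂ : W}

lemma opu_adj_inl_inl {u v : V} :
    (onePointUnion G₁ G₂ x₁ x₂).Adj (Sum.inl u) (Sum.inl v) ↔ G₁.Adj u v := by
  simp only [onePointUnion, fromRel_adj]
  constructor
  · rintro ⟨h, h1 | h1⟩
    · exact h1
    · exact h1.symm
  · intro h
    exact ⟨by simp [h.ne], Or.inl h⟩

lemma opu_adj_inr_inr {u v : {b : W // b ≠ x₂}} :
    (onePointUnion G₁ G₂ x₁ x₂).Adj (Sum.inr u) (Sum.inr v) ↔ G₂.Adj u.1 v.1 := by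
  simp only [onePointUnion, fromRel_adj]
  constructor
  · rintro ⟨h, h1 | h1⟩
    · exact h1
    · exact h1.symm
  · intro h
    refine ⟨?_, Or.inl h⟩
    simp only [ne_eq, Sum.inr.injEq]
    intro he
    exact h.ne (congrArg Subtype.val he)

lemma opu_adj_inl_inr {u : V} {v : {b : W // b ≠ x₂}} :
    (onePointUnion G₁ G₂ x₁ x₂).Adj (Sum.inl u) (Sum.inr v) ↔ u = x₁ ∧ G₂.Adj x₂ v.1 := by
  simp only [onePointUnion, fromRel_adj]
  constructor
  · rintro ⟨h, h1 | h1⟩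
    · exact h1
    · exact h1.elim
  · intro h
    exact ⟨by simp, Or.inl h⟩

/-- the inclusion of `G₁` -/
def opuHom₁ (G₂ : SimpleGraph W) (x₁ : V) (x₂ : W) : G₁ →g onePointUnion G₁ G₂ x₁ x₂ where
  toFun := Sum.inl
  map_rel' := fun h => opu_adj_inl_inl.mpr h

@[simp] lemma opuHom₁_apply (u : V) : (opuHom₁ (G₁ := G₁) G₂ x₁ x₂) u = Sum.inl u := rfl

/-- the inclusion of `G₂` -/
def opuHom₂ (G₁ : SimpleGraph V) (x₁ : V) (x₂ : W) : G₂ →g onePointUnion G₁ G₂ x₁ x₂ where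
  toFun := fun y => if h : y = x₂ then Sum.inl x₁ else Sum.inr ⟨y, h⟩
  map_rel' := by
    intro a b h
    show _
    by_cases ha : a = x₂
    · have hb : b ≠ x₂ := by
        intro hbe
        rw [ha, hbe] at h
        exact h.ne rfl
      rw [dif_pos ha, dif_neg hb]
      refine opu_adj_inl_inr.mpr ⟨rfl, ?_⟩
      rw [ha] at h
      exact h
    · by_cases hb : b = x₂
      · rw [dif_pos hb, dif_neg ha]
        refine (opu_adj_inl_inr.mpr ⟨rfl, ?_⟩).symm
        rw [hb] at h
        exact h.symm
      · rw [dif_neg ha, dif_neg hb]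
        exact opu_adj_inr_inr.mpr h

@[simp] lemma opuHom₂_apply (y : W) :
    (opuHom₂ (G₂ := G₂) G₁ x₁ x₂) y
      = if h : y = x₂ then Sum.inl x₁ else Sum.inr ⟨y, h⟩ := rfl

lemma opu_connected (h₁ : G₁.Connected) (h₂ : G₂.Connected) :
    (onePointUnion G₁ G₂ x₁ x₂).Connected := by
  rw [connected_iff]
  refine ⟨fun a b => ?_, ⟨Sum.inl x₁⟩⟩
  have key : ∀ c, (onePointUnion G₁ G₂ x₁ x₂).Reachable c (Sum.inl x₁) := by
    rintro (u | w)
    · exact (h₁.preconnected u x₁).map (opuHom₁ G₂ x₁ x₂)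
    · have := (h₂.preconnected w.1 x₂).map (opuHom₂ G₁ x₁ x₂)
      simpa [opuHom₂_apply, w.2] using this
  exact (key a).trans (key b).symm

/-- distances do not increase under a map sending edges to edges-or-equal -/
lemma dist_le_of_pseudoHom {V' W' : Type*} {G : SimpleGraph V'} {G' : SimpleGraph W'}
    (hc : G'.Connected) (f : V' → W')
    (hf : ∀ ⦃a b⦄, G.Adj a b → G'.Adj (f a) (f b) ∨ f a = f b)
    {a b : V'} (p : G.Walk a b) : G'.dist (f a) (f b) ≤ p.length := by
  induction p with
  | nil => simp
  | @cons a c b h q ih =>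
    rcases hf h with h' | h'
    · calc G'.dist (f a) (f b) ≤ G'.dist (f a) (f c) + G'.dist (f c) (f b) :=
            hc.dist_triangle
        _ ≤ 1 + q.length := by
            have := dist_eq_one_iff_adj.mpr h'
            omega
        _ = (SimpleGraph.Walk.cons h q).length := by
            rw [SimpleGraph.Walk.length_cons]; omega
    · rw [h']
      calc G'.dist (f c) (f b) ≤ q.length := ih
        _ ≤ _ := by rw [SimpleGraph.Walk.length_cons]; omega

lemma hom_dist_le {V' W' : Type*} {G : SimpleGraph V'} {G' : SimpleGraph W'}
    (f : G →g G') (hr : G.Connected) {a b : V'} : G'.dist (f a) (f b) ≤ G.dist a b := by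
  obtain ⟨p, hp⟩ := hr.exists_walk_length_eq_dist a b
  calc G'.dist (f a) (f b) ≤ (p.map f).length := dist_le _
    _ = G.dist a b := by rw [SimpleGraph.Walk.length_map, hp]

variable (h₁ : G₁.Connected) (h₂ : G₂.Connected)
include h₁ h₂

lemma opu_dist_inl_inl (u v : V) :
    (onePointUnion G₁ G₂ x₁ x₂).dist (Sum.inl u) (Sum.inl v) = G₁.dist u v := by
  apply le_antisymm
  · exact hom_dist_le (opuHom₁ G₂ x₁ x₂) h₁
  · obtain ⟨p, hp⟩ := (opu_connected h₁ h₂ (Sum.inl u) (Sum.inl v)).exists_walk_length_eq_dist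
    rw [← hp]
    exact dist_le_of_pseudoHom h₁ (Sum.elim id (fun _ => x₁)) (by
      rintro (a | a) (b | b) hab
      · exact Or.inl (opu_adj_inl_inl.mp hab)
      · exact Or.inr (opu_adj_inl_inr.mp hab).1
      · exact Or.inr ((opu_adj_inl_inr.mp hab.symm).1).symm
      · exact Or.inr rfl) p

lemma opu_dist_inr_inr (u v : {b : W // b ≠ x₂}) :
    (onePointUnion G₁ G₂ x₁ x₂).dist (Sum.inr u) (Sum.inr v) = G₂.dist u.1 v.1 := by
  apply le_antisymm
  · have := hom_dist_le (opuHom₂ G₁ x₁ x₂) h₂ (a := u.1) (b := v.1)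
    simpa [opuHom₂_apply, u.2, v.2] using this
  · obtain ⟨p, hp⟩ := (opu_connected h₁ h₂ (Sum.inr u) (Sum.inr v)).exists_walk_length_eq_dist
    rw [← hp]
    exact dist_le_of_pseudoHom h₂ (Sum.elim (fun _ => x₂) Subtype.val) (by
      rintro (a | a) (b | b) hab
      · exact Or.inr rfl
      · exact Or.inl (opu_adj_inl_inr.mp hab).2
      · exact Or.inl ((opu_adj_inl_inr.mp hab.symm).2).symm
      · exact Or.inl (opu_adj_inr_inr.mp hab)) p

omit h₁ h₂ in
lemma opu_mem_support :
    ∀ (c d : V ⊕ {b : W // b ≠ x₂}) (p : (onePointUnion G₁ G₂ x₁ x₂).Walk c d)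
      (u : V) (w : {b : W // b ≠ x₂}), c = Sum.inl u → d = Sum.inr w →
      (Sum.inl x₁ : V ⊕ {b : W // b ≠ x₂}) ∈ p.support := by
  intro c d p
  induction p with
  | nil =>
    rintro u w rfl h
    exact absurd h (by simp)
  | @cons a c b h q ih =>
    rintro u w rfl rfl
    rcases c with u' | w'
    · rw [SimpleGraph.Walk.support_cons]
      exact List.mem_cons_of_mem _ (ih u' w rfl rfl)
    · have hux : u = x₁ := (opu_adj_inl_inr.mp h).1
      subst hux
      exact SimpleGraph.Walk.start_mem_support _

lemma opu_dist_inl_inr (u : V) (w : {b : W // b ≠ x₂}) :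
    (onePointUnion G₁ G₂ x₁ x₂).dist (Sum.inl u) (Sum.inr w) = G₁.dist u x₁ + G₂.dist x₂ w.1 := by
  apply le_antisymm
  · calc (onePointUnion G₁ G₂ x₁ x₂).dist (Sum.inl u) (Sum.inr w)
        ≤ (onePointUnion G₁ G₂ x₁ x₂).dist (Sum.inl u) (Sum.inl x₁)
          + (onePointUnion G₁ G₂ x₁ x₂).dist (Sum.inl x₁) (Sum.inr w) :=
          (opu_connected h₁ h₂).dist_triangle
      _ ≤ G₁.dist u x₁ + G₂.dist x₂ w.1 := by
          have hA := hom_dist_le (opuHom₁ G₂ x₁ x₂) h₁ (a := u) (b := x₁)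
          have hB := hom_dist_le (opuHom₂ G₁ x₁ x₂) h₂ (a := x₂) (b := w.1)
          rw [opuHom₁_apply, opuHom₁_apply] at hA
          rw [opuHom₂_apply, opuHom₂_apply, dif_pos rfl, dif_neg w.2] at hB
          simp only [Subtype.coe_eta] at hB
          omega
  · obtain ⟨p, hp⟩ :=
      (opu_connected h₁ h₂ (Sum.inl u) (Sum.inr w)).exists_walk_length_eq_dist
    have hx : (Sum.inl x₁ : V ⊕ {b : W // b ≠ x₂}) ∈ p.support :=
      opu_mem_support _ _ p u w rfl rfl
    have hsplit := congrArg SimpleGraph.Walk.length (p.take_spec hx)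
    rw [SimpleGraph.Walk.length_append] at hsplit
    have l1 : G₁.dist u x₁ ≤ (p.takeUntil _ hx).length := by
      have := dist_le_of_pseudoHom h₁ (Sum.elim id (fun _ => x₁)) (by
        rintro (a | a) (b | b) hab
        · exact Or.inl (opu_adj_inl_inl.mp hab)
        · exact Or.inr (opu_adj_inl_inr.mp hab).1
        · exact Or.inr ((opu_adj_inl_inr.mp hab.symm).1).symm
        · exact Or.inr rfl) (p.takeUntil _ hx)
      simpa using this
    have l2 : G₂.dist x₂ w.1 ≤ (p.dropUntil _ hx).length := by
      have := dist_le_of_pseudoHom h₂ (Sum.elim (fun _ => x₂) Subtype.val) (by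
        rintro (a | a) (b | b) hab
        · exact Or.inr rfl
        · exact Or.inl (opu_adj_inl_inr.mp hab).2
        · exact Or.inl ((opu_adj_inl_inr.mp hab.symm).2).symm
        · exact Or.inl (opu_adj_inr_inr.mp hab)) (p.dropUntil _ hx)
      simpa using this
    omega

end opu

/-- The bouquet of two odd cycles at a common vertex has local metric
dimension 2. -/
theorem localMetricDim_bouquet_two_odd_cycles (m n : ℕ) (hm : 3 ≤ m) (hn : 3 ≤ n)
    (hmo : Odd m) (hno : Odd n) (x₁ : Fin m) (x₂ : Fin n) :
    localMetricDim
      (onePointUnion (SimpleGraph.cycleGraph m) (SimpleGraph.cycleGraph n) x₁ x₂) = 2 := by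
  obtain ⟨K, rfl⟩ : ∃ K, m = 2*K+3 := by
    obtain ⟨r, hr⟩ := hmo
    exact ⟨r - 1, by omega⟩
  obtain ⟨L, rfl⟩ : ∃ L, n = 2*L+3 := by
    obtain ⟨r, hr⟩ := hno
    exact ⟨r - 1, by omega⟩
  clear hm hn hmo hno
  have h₁ : (cycleGraph (2*K+3)).Connected := cycleGraph_connected
  have h₂ : (cycleGraph (2*L+3)).Connected := cycleGraph_connected
  set H := onePointUnion (cycleGraph (2*K+3)) (cycleGraph (2*L+3)) x₁ x₂ with hH
  have hll : ∀ u v, H.dist (Sum.inl u) (Sum.inl v) = (cycleGraph (2*K+3)).dist u v :=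
    fun u v => opu_dist_inl_inl h₁ h₂ u v
  have hrr : ∀ u v, H.dist (Sum.inr u) (Sum.inr v) = (cycleGraph (2*L+3)).dist u.1 v.1 :=
    fun u v => opu_dist_inr_inr h₁ h₂ u v
  have hlr : ∀ u w, H.dist (Sum.inl u) (Sum.inr w)
      = (cycleGraph (2*K+3)).dist u x₁ + (cycleGraph (2*L+3)).dist x₂ w.1 :=
    fun u w => opu_dist_inl_inr h₁ h₂ u w
  have hrl : ∀ u w, H.dist (Sum.inr w) (Sum.inl u)
      = (cycleGraph (2*K+3)).dist u x₁ + (cycleGraph (2*L+3)).dist x₂ w.1 := by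
    intro u w
    rw [SimpleGraph.dist_comm]
    exact hlr u w
  have hone : ∀ (M : ℕ) (y : Fin (M+3)), (cycleGraph (M+3)).Adj y (y+1) := by
    intro M y
    rw [cycleGraph_adj]
    right
    ring
  have hb₀ne : x₂ + 1 ≠ x₂ := by
    intro h
    have h0 := congrArg Fin.val (add_eq_left.mp h)
    simp at h0
  set b₀ : {b : Fin (2*L+3) // b ≠ x₂} := ⟨x₂ + 1, hb₀ne⟩ with hb₀
  set S : Finset (Fin (2*K+3) ⊕ {b : Fin (2*L+3) // b ≠ x₂}) :=
    {Sum.inl (x₁+1), Sum.inr b₀} with hS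
  have hcard : S.card = 2 := Finset.card_pair (by simp)
  have hgen : IsLocalMetricGenerator H ↑S := by
    rintro (u | w) (v | w') hadj
    · -- inl, inl
      have hA := opu_adj_inl_inl.mp hadj
      by_cases hx : (cycleGraph (2*K+3)).dist u (x₁+1) = (cycleGraph (2*K+3)).dist v (x₁+1)
      · have hne : (cycleGraph (2*K+3)).dist u x₁ ≠ (cycleGraph (2*K+3)).dist v x₁ :=
          fun h => cyc_pair K u v x₁ hA h hx
        refine ⟨Sum.inr b₀, by simp [hS], ?_⟩
        rw [hlr, hlr]
        omega
      · exact ⟨Sum.inl (x₁+1), by simp [hS], by rw [hll, hll]; exact hx⟩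
    · -- inl, inr : u = x₁
      obtain ⟨hu, hA2⟩ := opu_adj_inl_inr.mp hadj
      refine ⟨Sum.inl (x₁+1), by simp [hS], ?_⟩
      rw [hu, hll, hrl]
      have e1 : (cycleGraph (2*K+3)).dist x₁ (x₁+1) = 1 := dist_eq_one_iff_adj.mpr (hone _ x₁)
      have e2 : (cycleGraph (2*K+3)).dist (x₁+1) x₁ = 1 := by
        rw [SimpleGraph.dist_comm]; exact e1
      have e3 : 0 < (cycleGraph (2*L+3)).dist x₂ w'.1 :=
        h₂.pos_dist_of_ne (fun h => w'.2 h.symm)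
      omega
    · -- inr, inl : v = x₁
      obtain ⟨hv, hA2⟩ := opu_adj_inl_inr.mp hadj.symm
      refine ⟨Sum.inl (x₁+1), by simp [hS], ?_⟩
      rw [hv, hll, hrl]
      have e1 : (cycleGraph (2*K+3)).dist x₁ (x₁+1) = 1 := dist_eq_one_iff_adj.mpr (hone _ x₁)
      have e2 : (cycleGraph (2*K+3)).dist (x₁+1) x₁ = 1 := by
        rw [SimpleGraph.dist_comm]; exact e1
      have e3 : 0 < (cycleGraph (2*L+3)).dist x₂ w.1 :=
        h₂.pos_dist_of_ne (fun h => w.2 h.symm)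
      omega
    · -- inr, inr
      have hA := opu_adj_inr_inr.mp hadj
      by_cases hx : (cycleGraph (2*L+3)).dist w.1 (x₂+1) = (cycleGraph (2*L+3)).dist w'.1 (x₂+1)
      · have hne : (cycleGraph (2*L+3)).dist w.1 x₂ ≠ (cycleGraph (2*L+3)).dist w'.1 x₂ :=
          fun h => cyc_pair L w.1 w'.1 x₂ hA h hx
        refine ⟨Sum.inl (x₁+1), by simp [hS], ?_⟩
        rw [hrl, hrl]
        have c1 : (cycleGraph (2*L+3)).dist x₂ w.1 = (cycleGraph (2*L+3)).dist w.1 x₂ :=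
          SimpleGraph.dist_comm
        have c2 : (cycleGraph (2*L+3)).dist x₂ w'.1 = (cycleGraph (2*L+3)).dist w'.1 x₂ :=
          SimpleGraph.dist_comm
        omega
      · refine ⟨Sum.inr b₀, by simp [hS], ?_⟩
        rw [hrr, hrr]
        exact hx
  have hdef : localMetricDim H = sInf {k | ∃ T : Finset (Fin (2*K+3) ⊕ {b : Fin (2*L+3) // b ≠ x₂}),
      IsLocalMetricGenerator H ↑T ∧ T.card = k} := rfl
  have hub : localMetricDim H ≤ 2 := by
    rw [hdef]
    exact Nat.sInf_le ⟨S, hgen, hcard⟩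
  have hmem := Nat.sInf_mem (s := {k | ∃ T : Finset (Fin (2*K+3) ⊕ {b : Fin (2*L+3) // b ≠ x₂}),
      IsLocalMetricGenerator H ↑T ∧ T.card = k}) ⟨2, S, hgen, hcard⟩
  rw [← hdef] at hmem
  obtain ⟨T, hTgen, hTcard⟩ := hmem
  by_contra hne2
  have hT1 : T.card ≤ 1 := by omega
  obtain ⟨c, hc⟩ := Finset.card_le_one_iff_subset_singleton.mp hT1
  rcases c with cu | cw
  · -- c in left cycle: use antipodal edge of x₂ in right cycle
    obtain ⟨d1, d2, hadj2, hne1, hne1'⟩ := cyc_antipodal L x₂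
    set a₁ : {b : Fin (2*L+3) // b ≠ x₂} := ⟨x₂ + ((L+1:ℕ) : Fin (2*L+3)), hne1⟩ with ha₁
    set a₂ : {b : Fin (2*L+3) // b ≠ x₂} := ⟨x₂ + ((L+2:ℕ) : Fin (2*L+3)), hne1'⟩ with ha₂
    have hadjH : H.Adj (Sum.inr a₁) (Sum.inr a₂) := opu_adj_inr_inr.mpr hadj2
    obtain ⟨w, hw, hwne⟩ := hTgen hadjH
    have hwc : w = Sum.inl cu := Finset.mem_singleton.mp (hc (Finset.mem_coe.mp hw))
    subst hwc
    apply hwne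
    have e₁ : (cycleGraph (2*L+3)).dist x₂ a₁.1 = L+1 := by
      rw [SimpleGraph.dist_comm]; exact d1
    have e₂ : (cycleGraph (2*L+3)).dist x₂ a₂.1 = L+1 := by
      rw [SimpleGraph.dist_comm]; exact d2
    rw [hrl, hrl, e₁, e₂]
  · -- c in right cycle: use antipodal edge of x₁ in left cycle
    obtain ⟨d1, d2, hadj1, _, _⟩ := cyc_antipodal K x₁
    have hadjH : H.Adj (Sum.inl (x₁ + ((K+1:ℕ) : Fin (2*K+3))))
        (Sum.inl (x₁ + ((K+2:ℕ) : Fin (2*K+3)))) := opu_adj_inl_inl.mpr hadj1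
    obtain ⟨w, hw, hwne⟩ := hTgen hadjH
    have hwc : w = Sum.inr cw := Finset.mem_singleton.mp (hc (Finset.mem_coe.mp hw))
    subst hwc
    apply hwne
    rw [hlr, hlr, d1, d2]
end
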